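/- arXiv:2203.03777 — 2 statements merged into one kernel-verified Lean document; each statement's English description precedes it below -/
import Mathlib

section
/- Let f be continuous on [α,β] and let τ : [α,β] → [α,β] be continuously differentiable with τ(α)=α, τ(β)=β, and τ' > 0 on [α,β]. Define C̃_n^τ[f,[α,β]](x) = ∑_{k=0}^n f(τ^{-1}((β-α)k/n + α)) · p̃_{n,k}(τ(x);[α,β]). Then C̃_n^τ[f,[α,β]] converges uniformly to f on [α,β] as n → ∞. -/
open Finset

/-- Shifted Bernstein basis polynomial on `[α, β]`. -/
noncomputable def ptilde (α β : ℝ) (n k : ℕ) (x : ℝ) : ℝ :=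
  (1 / (β - α) ^ n) * (n.choose k : ℝ) * (x - α) ^ k * (β - x) ^ (n - k)

/-- The shifted Bernstein-type operator
`C̃_n^τ[f,[α,β]](x) = ∑_k f(σ((β-α)k/n + α)) p̃_{n,k}(τ(x);[α,β])`,
where `σ` is the inverse of `τ` on `[α,β]`. -/
noncomputable def Ctilde (α β : ℝ) (τ σ : ℝ → ℝ) (n : ℕ) (f : ℝ → ℝ) (x : ℝ) : ℝ :=
  ∑ k ∈ Finset.range (n + 1),
    f (σ ((β - α) * (k : ℝ) / n + α)) * ptilde α β n k (τ x)

theorem Ctilde_tendstoUniformly (α β : ℝ) (h : α < β) (τ σ f : ℝ → ℝ)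
    (hτ : ContDiffOn ℝ 1 τ (Set.Icc α β))
    (hmap : Set.MapsTo τ (Set.Icc α β) (Set.Icc α β))
    (hτα : τ α = α) (hτβ : τ β = β)
    (hτ' : ∀ x ∈ Set.Icc α β, 0 < derivWithin τ (Set.Icc α β) x)
    (hσ : ∀ x ∈ Set.Icc α β, σ (τ x) = x)
    (hσ' : ∀ u ∈ Set.Icc α β, τ (σ u) = u)
    (hf : ContinuousOn f (Set.Icc α β)) :
    TendstoUniformlyOn (fun n x => Ctilde α β τ σ n f x) f Filter.atTop (Set.Icc α β) := by
  have hβα : (0:ℝ) < β - α := sub_pos.mpr h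
  have hne : (β - α) ≠ 0 := ne_of_gt hβα
  have hτc : ContinuousOn τ (Set.Icc α β) := hτ.continuousOn
  -- surjectivity of τ on [α, β]
  have hsurj : Set.Icc α β ⊆ τ '' Set.Icc α β := by
    have := intermediate_value_Icc h.le hτc
    rwa [hτα, hτβ] at this
  have hσmap : ∀ u ∈ Set.Icc α β, σ u ∈ Set.Icc α β := by
    intro u hu
    obtain ⟨x, hx, hxu⟩ := hsurj hu
    rw [← hxu, hσ x hx]; exact hx
  -- continuity of σ on [α, β] via compactness
  have hσc : ContinuousOn σ (Set.Icc α β) := by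
    set s := Set.Icc α β
    have hcont : Continuous (fun x : s => (⟨τ x, hmap x.2⟩ : s)) :=
      Continuous.subtype_mk (hτc.restrict) _
    have hbij : Function.Bijective (fun x : s => (⟨τ x, hmap x.2⟩ : s)) := by
      constructor
      · intro x y hxy
        have hτxy : τ x = τ y := congrArg Subtype.val hxy
        have : σ (τ (x:ℝ)) = σ (τ (y:ℝ)) := by rw [hτxy]
        rw [hσ _ x.2, hσ _ y.2] at this
        exact Subtype.ext this
      · intro u
        obtain ⟨x, hx, hxu⟩ := hsurj u.2
        exact ⟨⟨x, hx⟩, Subtype.ext hxu⟩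
    let e : s ≃ s := Equiv.ofBijective _ hbij
    have he : Continuous (e : s → s) := hcont
    let homeo := Continuous.homeoOfEquivCompactToT2 he
    rw [continuousOn_iff_continuous_restrict]
    have hkey : Set.domRestrict s σ = fun u : s => ((homeo.symm u : s) : ℝ) := by
      funext u
      have h1 : homeo (homeo.symm u) = u := homeo.apply_symm_apply u
      have h2 : τ ((homeo.symm u : s) : ℝ) = (u : ℝ) := congrArg Subtype.val h1
      have := hσ ((homeo.symm u : s) : ℝ) (homeo.symm u).2
      simp only [Set.domRestrict_apply]
      rw [← h2, this]
    rw [hkey]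
    exact continuous_subtype_val.comp homeo.symm.continuous
  -- the transported function on [0,1]
  set gr : ℝ → ℝ := fun t => f (σ ((β - α) * t + α)) with hgr
  have haff : ∀ t ∈ Set.Icc (0:ℝ) 1, (β - α) * t + α ∈ Set.Icc α β := by
    intro t ht
    constructor
    · nlinarith [ht.1]
    · nlinarith [ht.2]
  have hgrc : ContinuousOn gr (Set.Icc (0:ℝ) 1) := by
    apply hf.comp (hσc.comp (by fun_prop) haff)
    intro t ht
    exact hσmap _ (haff t ht)
  let gC : C(unitInterval, ℝ) := ⟨Set.restrict _ gr, continuousOn_iff_continuous_restrict.mp hgrc⟩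
  -- Bernstein approximation converges uniformly
  have hB : Filter.Tendsto (fun n : ℕ => bernsteinApproximation n gC) Filter.atTop (nhds gC) :=
    bernsteinApproximation_uniform gC
  rw [ContinuousMap.tendsto_iff_tendstoUniformly] at hB
  set G : ℕ → ℝ → ℝ := fun n t =>
    ∑ k ∈ Finset.range (n + 1), gr ((k:ℝ)/n) * (n.choose k : ℝ) * t ^ k * (1 - t) ^ (n - k)
    with hG
  have hBU : TendstoUniformlyOn G gr Filter.atTop (Set.Icc (0:ℝ) 1) := by
    rw [tendstoUniformlyOn_iff_tendstoUniformly_comp_coe]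
    have heq : (fun (n : ℕ) (x : Set.Icc (0:ℝ) 1) => G n (x:ℝ))
        = fun (n : ℕ) (x : Set.Icc (0:ℝ) 1) => bernsteinApproximation n gC x := by
      funext n x
      rw [bernsteinApproximation.apply]
      rw [hG]
      simp only [Finset.sum_range (fun k => gr ((k:ℝ)/n) * (n.choose k : ℝ)
        * (x:ℝ) ^ k * (1 - (x:ℝ)) ^ (n - k))]
      apply Finset.sum_congr rfl
      intro k _
      rw [bernstein_apply]
      have : gC (bernstein.z k) = gr ((k:ℝ)/n) := rfl
      rw [this]; ring
    rw [heq]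
    exact hB
  -- transport back via φ
  set φ : ℝ → ℝ := fun x => (τ x - α) / (β - α) with hφ
  have hsub : Set.Icc α β ⊆ φ ⁻¹' (Set.Icc (0:ℝ) 1) := by
    intro x hx
    have hτx := hmap hx
    constructor
    · exact div_nonneg (by linarith [hτx.1]) hβα.le
    · rw [div_le_one hβα]; linarith [hτx.2]
  have hcomp : TendstoUniformlyOn (fun n => G n ∘ φ) (gr ∘ φ) Filter.atTop (Set.Icc α β) :=
    (hBU.comp φ).mono hsub
  have hgrφ : Set.EqOn (gr ∘ φ) f (Set.Icc α β) := by
    intro x hx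
    have : (β - α) * ((τ x - α) / (β - α)) + α = τ x := by field_simp; ring
    simp only [Function.comp_apply, hgr, hφ, this]
    rw [hσ x hx]
  have hGφ : ∀ n : ℕ, Set.EqOn (G n ∘ φ) (fun x => Ctilde α β τ σ n f x) (Set.Icc α β) := by
    intro n x hx
    simp only [Function.comp_apply, hG, hφ, Ctilde]
    apply Finset.sum_congr rfl
    intro k hk
    have hkn : k ≤ n := Nat.lt_succ_iff.mp (Finset.mem_range.mp hk)
    have hpow : (β - α) ^ k * (β - α) ^ (n - k) = (β - α) ^ n := by
      rw [← pow_add, Nat.add_sub_cancel' hkn]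
    have h1 : (1:ℝ) - (τ x - α) / (β - α) = (β - τ x) / (β - α) := by field_simp; ring
    rw [h1, ptilde, div_pow, div_pow]
    have harg : (β - α) * ((k:ℝ)/n) = (β - α) * (k:ℝ) / n := by ring
    rw [hgr]
    simp only [harg]
    field_simp
    rw [← hpow]
    ring
  exact ((hcomp.congr (Filter.Eventually.of_forall hGφ)).congr_right hgrφ)
end

section
/- Let f be continuous on the standard 2-simplex T² = {(x,y) : x ≥ 0, y ≥ 0, x+y ≤ 1}. Then the Bernstein–Stancu polynomials B_n[f](x,y) = ∑_{k+j ≤ n} f(k/n, j/n) · (n! / (k! j! (n-k-j)!)) · x^k y^j (1-x-y)^{n-k-j} converge uniformly to f on T² as n → ∞. -/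
open Finset

/-- The standard 2-simplex in `ℝ²`. -/
def simplexT2 : Set (ℝ × ℝ) := {p | 0 ≤ p.1 ∧ 0 ≤ p.2 ∧ p.1 + p.2 ≤ 1}

/-- The Bernstein–Stancu polynomial on the simplex; note
`n!/(k! j! (n-k-j)!) = C(n,k)·C(n-k,j)` for `k + j ≤ n`. -/
noncomputable def bernsteinSimplex (n : ℕ) (f : ℝ × ℝ → ℝ) (p : ℝ × ℝ) : ℝ :=
  ∑ k ∈ Finset.range (n + 1), ∑ j ∈ Finset.range (n - k + 1),
    f ((k : ℝ) / n, (j : ℝ) / n) * (n.choose k : ℝ) * ((n - k).choose j : ℝ) *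
      p.1 ^ k * p.2 ^ j * (1 - p.1 - p.2) ^ (n - k - j)

/-- The weight of the Bernstein–Stancu polynomial. -/
noncomputable def bwS (n k j : ℕ) (p : ℝ × ℝ) : ℝ :=
  (n.choose k : ℝ) * ((n - k).choose j : ℝ) * p.1 ^ k * p.2 ^ j * (1 - p.1 - p.2) ^ (n - k - j)

lemma choose_mul_choose_symm (n k j : ℕ) :
    (n.choose k) * ((n - k).choose j) = (n.choose j) * ((n - j).choose k) := by
  rcases le_or_gt (k + j) n with h | h
  · have h1 := Nat.choose_mul (n := n) (k := k + j) (s := k) (Nat.le_add_right _ _)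
    have h2 := Nat.choose_mul (n := n) (k := k + j) (s := j) (Nat.le_add_left _ _)
    simp only [Nat.add_sub_cancel, Nat.add_sub_cancel_left] at h1 h2
    have h3 : (k + j).choose k = (k + j).choose j := by
      rw [← Nat.choose_symm (Nat.le_add_right k j), Nat.add_sub_cancel_left]
    rw [← h1, ← h2, h3]
  · rcases le_or_gt k n with hk | hk
    · rcases le_or_gt j n with hj | hj
      · rw [Nat.choose_eq_zero_of_lt (by omega : n - k < j),
          Nat.choose_eq_zero_of_lt (by omega : n - j < k)]
        ring
      · rw [Nat.choose_eq_zero_of_lt hj, Nat.choose_eq_zero_of_lt (by omega : n - k < j)]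
        ring
    · rw [Nat.choose_eq_zero_of_lt hk, Nat.choose_eq_zero_of_lt (by omega : n - j < k)]
      ring

lemma sum_triangle_comm (n : ℕ) (g : ℕ → ℕ → ℝ) (hg : ∀ k j, n < k + j → g k j = 0) :
    ∑ k ∈ range (n+1), ∑ j ∈ range (n-k+1), g k j
      = ∑ j ∈ range (n+1), ∑ k ∈ range (n-j+1), g k j := by
  have key : ∀ (h : ℕ → ℕ → ℝ), (∀ k j, n < k + j → h k j = 0) →
      ∑ k ∈ range (n+1), ∑ j ∈ range (n-k+1), h k j
        = ∑ k ∈ range (n+1), ∑ j ∈ range (n+1), h k j := by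
    intro h hh
    refine Finset.sum_congr rfl fun k hk => ?_
    have hk' : k ≤ n := Nat.lt_succ_iff.mp (mem_range.mp hk)
    refine Finset.sum_subset (by apply range_subset_range.mpr; omega) fun j hj hj' => ?_
    exact hh k j (by simp only [mem_range] at hj hj'; omega)
  rw [key g hg, Finset.sum_comm, ← key (fun j k => g k j) (fun j k hjk => hg k j (by omega))]

lemma bern1d_sum (n : ℕ) (t : ℝ) :
    ∑ k ∈ range (n+1), (n.choose k : ℝ) * t^k * (1-t)^(n-k) = 1 := by
  calc ∑ k ∈ range (n+1), (n.choose k : ℝ) * t^k * (1-t)^(n-k)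
      = ∑ k ∈ range (n+1), t^k * (1-t)^(n-k) * (n.choose k : ℝ) :=
        Finset.sum_congr rfl fun k _ => by ring
    _ = (t + (1-t))^n := (add_pow t (1-t) n).symm
    _ = 1 := by norm_num

lemma bern1d_var (n : ℕ) (hn : 0 < n) (t : ℝ) (ht : 0 ≤ t) (ht1 : t ≤ 1) :
    ∑ k ∈ range (n+1), (n.choose k : ℝ) * t^k * (1-t)^(n-k) * ((k:ℝ)/n - t)^2
      = t*(1-t)/n := by
  have h := bernstein.variance (n := n) (by omega) ⟨t, ht, ht1⟩
  simp only [bernstein.z] at h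
  rw [Fin.sum_univ_eq_sum_range
    (fun k : ℕ => (t - (k:ℝ)/n)^2 * (bernstein n k) ⟨t, ht, ht1⟩)] at h
  rw [← h]
  refine Finset.sum_congr rfl fun k hk => ?_
  simp [bernstein, bernsteinPolynomial]
  ring

lemma marg_x (n : ℕ) (p : ℝ × ℝ) (F : ℕ → ℝ) :
    ∑ k ∈ range (n+1), ∑ j ∈ range (n-k+1), bwS n k j p * F k
      = ∑ k ∈ range (n+1), (n.choose k : ℝ) * p.1^k * (1-p.1)^(n-k) * F k := by
  refine Finset.sum_congr rfl fun k hk => ?_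
  have : ∑ j ∈ range (n-k+1), bwS n k j p * F k
      = ((n.choose k : ℝ) * p.1^k * F k) *
        ∑ j ∈ range (n-k+1), p.2^j * (1 - p.1 - p.2)^((n-k)-j) * (((n-k).choose j : ℝ)) := by
    rw [Finset.mul_sum]
    refine Finset.sum_congr rfl fun j hj => ?_
    simp only [bwS, Nat.sub_sub]
    rw [show n - (k + j) = (n - k) - j by omega]
    ring
  rw [this, ← add_pow]
  rw [show p.2 + (1 - p.1 - p.2) = 1 - p.1 by ring]
  ring

lemma marg_y (n : ℕ) (p : ℝ × ℝ) (F : ℕ → ℝ) :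
    ∑ k ∈ range (n+1), ∑ j ∈ range (n-k+1), bwS n k j p * F j
      = ∑ j ∈ range (n+1), (n.choose j : ℝ) * p.2^j * (1-p.2)^(n-j) * F j := by
  rw [sum_triangle_comm n (fun k j => bwS n k j p * F j) ?van]
  case van =>
    intro k j hkj
    simp only [bwS]
    rcases le_or_gt k n with hk | hk
    · simp [Nat.choose_eq_zero_of_lt (by omega : n - k < j)]
    · simp [Nat.choose_eq_zero_of_lt hk]
  refine Finset.sum_congr rfl fun j hj => ?_
  have : ∑ k ∈ range (n-j+1), bwS n k j p * F j
      = ((n.choose j : ℝ) * p.2^j * F j) *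
        ∑ k ∈ range (n-j+1), p.1^k * (1 - p.1 - p.2)^((n-j)-k) * (((n-j).choose k : ℝ)) := by
    rw [Finset.mul_sum]
    refine Finset.sum_congr rfl fun k hk => ?_
    simp only [bwS]
    rw [show n - k - j = (n - j) - k by omega,
      show (n.choose k : ℝ) * ((n-k).choose j : ℝ) = (n.choose j : ℝ) * ((n-j).choose k : ℝ) by
        exact_mod_cast congrArg (Nat.cast : ℕ → ℝ) (choose_mul_choose_symm n k j)]
    ring
  rw [this, ← add_pow]
  rw [show p.1 + (1 - p.1 - p.2) = 1 - p.2 by ring]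
  ring

lemma simplexT2_isCompact : IsCompact simplexT2 := by
  refine IsCompact.of_isClosed_subset (isCompact_Icc (a := ((0:ℝ),(0:ℝ))) (b := (1,1))) ?_ ?_
  · have : simplexT2 = {p : ℝ×ℝ | 0 ≤ p.1} ∩ {p | 0 ≤ p.2} ∩ {p | p.1 + p.2 ≤ 1} := by
      ext p; simp only [simplexT2, Set.mem_setOf_eq, Set.mem_inter_iff]; tauto
    rw [this]
    exact ((isClosed_le continuous_const continuous_fst).inter
      (isClosed_le continuous_const continuous_snd)).inter
      (isClosed_le (continuous_fst.add continuous_snd) continuous_const)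
  · rintro p ⟨h1, h2, h3⟩
    simp only [Set.mem_Icc, Prod.le_def]
    refine ⟨⟨h1, h2⟩, ⟨by linarith, by linarith⟩⟩

set_option maxHeartbeats 1000000 in
theorem bernsteinSimplex_tendstoUniformly (f : ℝ × ℝ → ℝ)
    (hf : ContinuousOn f simplexT2) :
    TendstoUniformlyOn (fun n p => bernsteinSimplex n f p) f Filter.atTop simplexT2 := by
  have hcomp := simplexT2_isCompact
  obtain ⟨M₀, hM₀⟩ := hcomp.exists_bound_of_continuousOn hf
  set M := max M₀ 1 with hMdef
  have hM1 : (1:ℝ) ≤ M := le_max_right _ _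
  have hMpos : (0:ℝ) < M := lt_of_lt_of_le one_pos hM1
  have hM : ∀ q ∈ simplexT2, |f q| ≤ M := fun q hq => by
    have := hM₀ q hq; rw [Real.norm_eq_abs] at this; exact this.trans (le_max_left _ _)
  rw [Metric.tendstoUniformlyOn_iff]
  intro ε hε
  have huc := hcomp.uniformContinuousOn_of_continuous hf
  rw [Metric.uniformContinuousOn_iff] at huc
  obtain ⟨δ, hδ, hδε⟩ := huc (ε/2) (by linarith)
  obtain ⟨N₀, hN₀⟩ := exists_nat_ge (4*M/(δ^2*ε))
  filter_upwards [Filter.eventually_ge_atTop (N₀+1)] with n hn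
  intro p hp
  obtain ⟨hx0, hy0, hxy⟩ := hp
  have hnpos : 0 < n := by omega
  have hn0 : (0:ℝ) < n := by exact_mod_cast hnpos
  have hx1 : p.1 ≤ 1 := by linarith
  have hy1 : p.2 ≤ 1 := by linarith
  have hz0 : 0 ≤ 1 - p.1 - p.2 := by linarith
  set C := 2*M/δ^2 with hC
  have hC0 : (0:ℝ) ≤ C := by positivity
  have hbw : ∀ k j, 0 ≤ bwS n k j p := fun k j =>
    mul_nonneg (mul_nonneg (mul_nonneg (mul_nonneg (by positivity) (by positivity))
      (pow_nonneg hx0 _)) (pow_nonneg hy0 _)) (pow_nonneg hz0 _)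
  have hB : bernsteinSimplex n f p
      = ∑ k ∈ range (n+1), ∑ j ∈ range (n-k+1), bwS n k j p * f ((k:ℝ)/n, (j:ℝ)/n) := by
    unfold bernsteinSimplex bwS
    exact Finset.sum_congr rfl fun k _ => Finset.sum_congr rfl fun j _ => by ring
  have hsum1 : ∑ k ∈ range (n+1), ∑ j ∈ range (n-k+1), bwS n k j p = 1 := by
    have h := marg_x n p (fun _ => (1:ℝ))
    simp only [mul_one] at h
    rw [h, bern1d_sum]
  have hvarx : ∑ k ∈ range (n+1), ∑ j ∈ range (n-k+1), bwS n k j p * ((k:ℝ)/n - p.1)^2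
      = p.1*(1-p.1)/n := by
    rw [marg_x n p (fun k => ((k:ℝ)/n - p.1)^2), bern1d_var n hnpos p.1 hx0 hx1]
  have hvary : ∑ k ∈ range (n+1), ∑ j ∈ range (n-k+1), bwS n k j p * ((j:ℝ)/n - p.2)^2
      = p.2*(1-p.2)/n := by
    rw [marg_y n p (fun j => ((j:ℝ)/n - p.2)^2), bern1d_var n hnpos p.2 hy0 hy1]
  have hpt : ∀ k ∈ range (n+1), ∀ j ∈ range (n-k+1),
      bwS n k j p * |f ((k:ℝ)/n, (j:ℝ)/n) - f p|
        ≤ bwS n k j p * (ε/2) + C * (bwS n k j p * ((k:ℝ)/n - p.1)^2)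
          + C * (bwS n k j p * ((j:ℝ)/n - p.2)^2) := by
    intro k hk j hj
    have hkjn : k + j ≤ n := by
      have h1 := mem_range.mp hk; have h2 := mem_range.mp hj; omega
    set q : ℝ × ℝ := ((k:ℝ)/n, (j:ℝ)/n) with hq
    have hq1 : q.1 = (k:ℝ)/n := rfl
    have hq2 : q.2 = (j:ℝ)/n := rfl
    have hqS : q ∈ simplexT2 := by
      refine ⟨by positivity, by positivity, ?_⟩
      rw [hq1, hq2, ← add_div, div_le_one hn0]
      exact_mod_cast hkjn
    have hA : (0:ℝ) ≤ ((k:ℝ)/n - p.1)^2 := sq_nonneg _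
    have hBsq : (0:ℝ) ≤ ((j:ℝ)/n - p.2)^2 := sq_nonneg _
    rcases lt_or_ge (dist q p) δ with hlt | hge
    · have h1 : |f q - f p| ≤ ε/2 := by
        have := hδε q hqS p ⟨hx0, hy0, hxy⟩ hlt
        rw [Real.dist_eq] at this
        exact this.le
      have h2 : bwS n k j p * |f q - f p| ≤ bwS n k j p * (ε/2) :=
        mul_le_mul_of_nonneg_left h1 (hbw k j)
      have h3 : 0 ≤ C * (bwS n k j p * ((k:ℝ)/n - p.1)^2) :=
        mul_nonneg hC0 (mul_nonneg (hbw k j) hA)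
      have h4 : 0 ≤ C * (bwS n k j p * ((j:ℝ)/n - p.2)^2) :=
        mul_nonneg hC0 (mul_nonneg (hbw k j) hBsq)
      linarith
    · have hdist : δ^2 ≤ ((k:ℝ)/n - p.1)^2 + ((j:ℝ)/n - p.2)^2 := by
        rw [Prod.dist_eq, hq1, hq2] at hge
        rcases le_max_iff.mp hge with h | h
        · rw [Real.dist_eq] at h
          have : δ^2 ≤ ((k:ℝ)/n - p.1)^2 := by
            calc δ^2 ≤ |(k:ℝ)/n - p.1|^2 := by
                  apply pow_le_pow_left₀ hδ.le h
              _ = ((k:ℝ)/n - p.1)^2 := sq_abs _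
          linarith
        · rw [Real.dist_eq] at h
          have : δ^2 ≤ ((j:ℝ)/n - p.2)^2 := by
            calc δ^2 ≤ |(j:ℝ)/n - p.2|^2 := by
                  apply pow_le_pow_left₀ hδ.le h
              _ = ((j:ℝ)/n - p.2)^2 := sq_abs _
          linarith
      have h2m : |f q - f p| ≤ 2*M := by
        calc |f q - f p| ≤ |f q| + |f p| := abs_sub _ _
          _ ≤ M + M := add_le_add (hM q hqS) (hM p ⟨hx0, hy0, hxy⟩)
          _ = 2*M := by ring
      have hCd : 2*M = C * δ^2 := by rw [hC]; field_simp
      have h1 : |f q - f p| ≤ C * (((k:ℝ)/n - p.1)^2 + ((j:ℝ)/n - p.2)^2) := by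
        calc |f q - f p| ≤ 2*M := h2m
          _ = C * δ^2 := hCd
          _ ≤ C * (((k:ℝ)/n - p.1)^2 + ((j:ℝ)/n - p.2)^2) :=
              mul_le_mul_of_nonneg_left hdist hC0
      have h2 : bwS n k j p * |f q - f p|
          ≤ bwS n k j p * (C * (((k:ℝ)/n - p.1)^2 + ((j:ℝ)/n - p.2)^2)) :=
        mul_le_mul_of_nonneg_left h1 (hbw k j)
      have h3 : 0 ≤ bwS n k j p * (ε/2) := mul_nonneg (hbw k j) (by linarith)
      nlinarith [hbw k j]
  have habs : |bernsteinSimplex n f p - f p|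
      ≤ ε/2 + C * (p.1*(1-p.1)/n) + C * (p.2*(1-p.2)/n) := by
    have hdiff : bernsteinSimplex n f p - f p
        = ∑ k ∈ range (n+1), ∑ j ∈ range (n-k+1),
            bwS n k j p * (f ((k:ℝ)/n, (j:ℝ)/n) - f p) := by
      calc bernsteinSimplex n f p - f p
          = (∑ k ∈ range (n+1), ∑ j ∈ range (n-k+1), bwS n k j p * f ((k:ℝ)/n, (j:ℝ)/n))
            - (∑ k ∈ range (n+1), ∑ j ∈ range (n-k+1), bwS n k j p) * f p := by
            rw [hB, hsum1, one_mul]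
        _ = ∑ k ∈ range (n+1), ∑ j ∈ range (n-k+1),
              bwS n k j p * (f ((k:ℝ)/n, (j:ℝ)/n) - f p) := by
            rw [Finset.sum_mul, ← Finset.sum_sub_distrib]
            refine Finset.sum_congr rfl fun k _ => ?_
            rw [Finset.sum_mul, ← Finset.sum_sub_distrib]
            exact Finset.sum_congr rfl fun j _ => by ring
    rw [hdiff]
    calc |∑ k ∈ range (n+1), ∑ j ∈ range (n-k+1),
            bwS n k j p * (f ((k:ℝ)/n, (j:ℝ)/n) - f p)|
        ≤ ∑ k ∈ range (n+1), |∑ j ∈ range (n-k+1),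
            bwS n k j p * (f ((k:ℝ)/n, (j:ℝ)/n) - f p)| := abs_sum_le_sum_abs _ _
      _ ≤ ∑ k ∈ range (n+1), ∑ j ∈ range (n-k+1),
            bwS n k j p * |f ((k:ℝ)/n, (j:ℝ)/n) - f p| := by
          refine Finset.sum_le_sum fun k _ => ?_
          refine (abs_sum_le_sum_abs _ _).trans (le_of_eq ?_)
          refine Finset.sum_congr rfl fun j _ => ?_
          rw [abs_mul, abs_of_nonneg (hbw k j)]
      _ ≤ ∑ k ∈ range (n+1), ∑ j ∈ range (n-k+1),
            (bwS n k j p * (ε/2) + C * (bwS n k j p * ((k:ℝ)/n - p.1)^2)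
              + C * (bwS n k j p * ((j:ℝ)/n - p.2)^2)) :=
          Finset.sum_le_sum fun k hk => Finset.sum_le_sum (hpt k hk)
      _ = (∑ k ∈ range (n+1), ∑ j ∈ range (n-k+1), bwS n k j p) * (ε/2)
            + C * (∑ k ∈ range (n+1), ∑ j ∈ range (n-k+1), bwS n k j p * ((k:ℝ)/n - p.1)^2)
            + C * (∑ k ∈ range (n+1), ∑ j ∈ range (n-k+1), bwS n k j p * ((j:ℝ)/n - p.2)^2) := by
          have e1 : (∑ k ∈ range (n+1), ∑ j ∈ range (n-k+1), bwS n k j p) * (ε/2)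
              = ∑ k ∈ range (n+1), ∑ j ∈ range (n-k+1), bwS n k j p * (ε/2) := by
            rw [Finset.sum_mul]
            exact Finset.sum_congr rfl fun k _ => Finset.sum_mul _ _ _
          have e2 : C * (∑ k ∈ range (n+1), ∑ j ∈ range (n-k+1), bwS n k j p * ((k:ℝ)/n - p.1)^2)
              = ∑ k ∈ range (n+1), ∑ j ∈ range (n-k+1), C * (bwS n k j p * ((k:ℝ)/n - p.1)^2) := by
            rw [Finset.mul_sum]
            exact Finset.sum_congr rfl fun k _ => Finset.mul_sum _ _ _
          have e3 : C * (∑ k ∈ range (n+1), ∑ j ∈ range (n-k+1), bwS n k j p * ((j:ℝ)/n - p.2)^2)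
              = ∑ k ∈ range (n+1), ∑ j ∈ range (n-k+1), C * (bwS n k j p * ((j:ℝ)/n - p.2)^2) := by
            rw [Finset.mul_sum]
            exact Finset.sum_congr rfl fun k _ => Finset.mul_sum _ _ _
          rw [e1, e2, e3]
          simp only [Finset.sum_add_distrib]
      _ = ε/2 + C * (p.1*(1-p.1)/n) + C * (p.2*(1-p.2)/n) := by
          rw [hsum1, hvarx, hvary, one_mul]
  have hxvar : p.1*(1-p.1) ≤ 1/4 := by nlinarith [sq_nonneg (p.1 - 1/2)]
  have hyvar : p.2*(1-p.2) ≤ 1/4 := by nlinarith [sq_nonneg (p.2 - 1/2)]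
  have hb1 : C * (p.1*(1-p.1)/n) ≤ M/(2*(δ^2*n)) := by
    have : C * (p.1*(1-p.1)/n) = 2*M*(p.1*(1-p.1))/(δ^2*n) := by rw [hC]; ring
    rw [this, show M/(2*(δ^2*n)) = 2*M*(1/4)/(δ^2*n) by ring]
    gcongr
  have hb2 : C * (p.2*(1-p.2)/n) ≤ M/(2*(δ^2*n)) := by
    have : C * (p.2*(1-p.2)/n) = 2*M*(p.2*(1-p.2))/(δ^2*n) := by rw [hC]; ring
    rw [this, show M/(2*(δ^2*n)) = 2*M*(1/4)/(δ^2*n) by ring]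
    gcongr
  have hnN : 4*M/(δ^2*ε) < (n:ℝ) := by
    have h1 : ((N₀:ℝ)) < n := by exact_mod_cast Nat.lt_of_lt_of_le (Nat.lt_succ_self N₀) hn
    linarith
  have hfin : M/(δ^2*n) < ε/2 := by
    rw [div_lt_iff₀ (by positivity)]
    rw [div_lt_iff₀ (by positivity)] at hnN
    nlinarith
  rw [Real.dist_eq, abs_sub_comm]
  calc |bernsteinSimplex n f p - f p|
      ≤ ε/2 + C * (p.1*(1-p.1)/n) + C * (p.2*(1-p.2)/n) := habs
    _ ≤ ε/2 + M/(2*(δ^2*n)) + M/(2*(δ^2*n)) := by linarith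
    _ = ε/2 + M/(δ^2*n) := by ring
    _ < ε/2 + ε/2 := by linarith
    _ = ε := by ring
end
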